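/- Let p ∈ ∂C for a planar convex body C with o in its interior, and suppose there exist q, r ∈ C realizing p as (θ, ℓ)-good, i.e., |pq|, |pr| ≥ ℓ and ∠qpr ≥ 180° − θ. Let q', r' be points with |qq'| ≤ η·(2/√3) and |rr'| ≤ η·(2/√3), and let p' be a point with |pp'| ≤ η·(2/√3), where η ≤ (√3·ℓ/8)·sin(θ/2). Then |p'q'| ≥ ℓ/2, |p'r'| ≥ ℓ/2, and ∠q'p'r' ≥ 180° − 2θ; that is, q', r' realize p' as (2θ, ℓ/2)-good. -/

import Mathlib

open Real EuclideanGeometry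
open scoped RealInnerProductSpace

private lemma angle_coe_add_abs (α β : Real.Angle) :
    |(α + β).toReal| ≤ |α.toReal| + |β.toReal| := by
  set a := α.toReal with ha
  set b := β.toReal with hb
  have h1 : α = (a : Real.Angle) := (Real.Angle.coe_toReal α).symm
  have h2 : β = (b : Real.Angle) := (Real.Angle.coe_toReal β).symm
  have hsum : α + β = ((a + b : ℝ) : Real.Angle) := by
    rw [h1, h2]; exact (Real.Angle.coe_add a b).symm
  by_cases h : -π < a + b ∧ a + b ≤ π
  · rw [hsum, Real.Angle.toReal_coe_eq_self_iff.2 h]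
    exact abs_add_le a b
  · have hpi : π ≤ |a + b| := by
      rcases not_and_or.1 h with h' | h'
      · push_neg at h'
        rw [abs_of_nonpos (by linarith [Real.pi_pos])]
        linarith
      · push_neg at h'
        rw [abs_of_pos (by linarith [Real.pi_pos])]
        linarith
    calc |(α + β).toReal| ≤ π := Real.Angle.abs_toReal_le_pi _
      _ ≤ |a + b| := hpi
      _ ≤ |a| + |b| := abs_add_le a b

private lemma angle_triangle2 (x y z : EuclideanSpace ℝ (Fin 2))
    (hx : x ≠ 0) (hy : y ≠ 0) (hz : z ≠ 0) :
    InnerProductGeometry.angle x z ≤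
      InnerProductGeometry.angle x y + InnerProductGeometry.angle y z := by
  haveI : Fact (Module.finrank ℝ (EuclideanSpace ℝ (Fin 2)) = 2) :=
    ⟨finrank_euclideanSpace_fin⟩
  set o : Orientation ℝ (EuclideanSpace ℝ (Fin 2)) (Fin 2) :=
    (EuclideanSpace.basisFun (Fin 2) ℝ).toBasis.orientation
  rw [o.angle_eq_abs_oangle_toReal hx hz, o.angle_eq_abs_oangle_toReal hx hy,
    o.angle_eq_abs_oangle_toReal hy hz, ← o.oangle_add hx hy hz]
  exact angle_coe_add_abs _ _

private lemma angle_pert {V : Type*} [NormedAddCommGroup V] [InnerProductSpace ℝ V]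
    (u u' : V) (s : ℝ) (hs0 : 0 ≤ s) (hs : s ≤ π / 2)
    (hu : u ≠ 0) (hu' : u' ≠ 0)
    (h1 : ‖u - u'‖ ≤ ‖u'‖ * Real.sin s) (h2 : ‖u - u'‖ < ‖u‖) :
    InnerProductGeometry.angle u u' ≤ s := by
  set a := InnerProductGeometry.angle u u' with hadef
  have hn : 0 < ‖u‖ := norm_pos_iff.2 hu
  have hn' : 0 < ‖u'‖ := norm_pos_iff.2 hu'
  have hcos : Real.cos a = (inner ℝ u u' : ℝ) / (‖u‖ * ‖u'‖) := InnerProductGeometry.cos_angle u u'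
  -- inner product is positive
  have hinner : 0 < (inner ℝ u u' : ℝ) := by
    have : (inner ℝ u u' : ℝ) = ‖u‖ ^ 2 - (inner ℝ u (u - u') : ℝ) := by
      rw [inner_sub_right, real_inner_self_eq_norm_sq]; ring
    have hb : (inner ℝ u (u - u') : ℝ) ≤ ‖u‖ * ‖u - u'‖ := real_inner_le_norm u (u - u')
    nlinarith
  have hcos0 : 0 < Real.cos a := by
    rw [hcos]; positivity
  have ha0 : 0 ≤ a := InnerProductGeometry.angle_nonneg u u'
  have hapi : a ≤ π := InnerProductGeometry.angle_le_pi u u'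
  have haq : a < π / 2 := by
    by_contra hcon
    push_neg at hcon
    have : Real.cos a ≤ 0 := Real.cos_nonpos_of_pi_div_two_le_of_le hcon (by linarith [Real.pi_pos])
    linarith
  -- sin a * ‖u'‖ ≤ ‖u - u'‖
  have hsin : Real.sin a * ‖u'‖ ≤ ‖u - u'‖ := by
    have hsq : (Real.sin a * ‖u'‖) ^ 2 ≤ ‖u - u'‖ ^ 2 := by
      have hsin2 : Real.sin a ^ 2 = 1 - Real.cos a ^ 2 := by
        have := Real.sin_sq_add_cos_sq a; linarith
      have hexp : ‖u - u'‖ ^ 2 = ‖u‖ ^ 2 - 2 * (inner ℝ u u' : ℝ) + ‖u'‖ ^ 2 := by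
        rw [← real_inner_self_eq_norm_sq, ← real_inner_self_eq_norm_sq,
          ← real_inner_self_eq_norm_sq, inner_sub_sub_self]
        ring_nf
        rw [real_inner_comm u' u]
        ring
      have hcos2 : Real.cos a ^ 2 = (inner ℝ u u' : ℝ) ^ 2 / (‖u‖ ^ 2 * ‖u'‖ ^ 2) := by
        rw [hcos]; field_simp
      rw [mul_pow, hsin2, hcos2, hexp]
      have h1' : (inner ℝ u u' : ℝ) ^ 2 / (‖u‖ ^ 2 * ‖u'‖ ^ 2) * ‖u'‖ ^ 2 = (inner ℝ u u' : ℝ) ^ 2 / ‖u‖ ^ 2 := by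
        field_simp
      have key : 0 ≤ (‖u‖ ^ 2 - (inner ℝ u u' : ℝ)) ^ 2 / ‖u‖ ^ 2 := by positivity
      have hexpand : (‖u‖ ^ 2 - (inner ℝ u u' : ℝ)) ^ 2 / ‖u‖ ^ 2
          = ‖u‖ ^ 2 - 2 * (inner ℝ u u' : ℝ) + (inner ℝ u u' : ℝ) ^ 2 / ‖u‖ ^ 2 := by
        field_simp; ring
      nlinarith [key, hexpand]
    have hLnn : 0 ≤ Real.sin a * ‖u'‖ :=
      mul_nonneg (Real.sin_nonneg_of_nonneg_of_le_pi ha0 hapi) hn'.le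
    nlinarith [norm_nonneg (u - u')]
  have hsinle : Real.sin a ≤ Real.sin s := by
    have : Real.sin a * ‖u'‖ ≤ Real.sin s * ‖u'‖ := by
      calc Real.sin a * ‖u'‖ ≤ ‖u - u'‖ := hsin
        _ ≤ ‖u'‖ * Real.sin s := h1
        _ = Real.sin s * ‖u'‖ := by ring
    exact le_of_mul_le_mul_right this hn'
  by_contra hcon
  push_neg at hcon
  have : Real.sin s < Real.sin a :=
    Real.strictMonoOn_sin ⟨by linarith [Real.pi_pos], by linarith⟩
      ⟨by linarith [Real.pi_pos], by linarith⟩ hcon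
  linarith

/-- Perturbation of (θ, ℓ)-good points: if q, r ∈ C realize p ∈ ∂C as (θ, ℓ)-good
(|pq|, |pr| ≥ ℓ, ∠qpr ≥ 180° − θ), and p', q', r' are perturbations of p, q, r by at most
η·(2/√3) with η ≤ (√3·ℓ/8)·sin(θ/2), then |p'q'|, |p'r'| ≥ ℓ/2 and ∠q'p'r' ≥ 180° − 2θ. -/
theorem stmt_16 (C : Set (EuclideanSpace ℝ (Fin 2))) (hC : Convex ℝ C)
    (h0 : (0 : EuclideanSpace ℝ (Fin 2)) ∈ interior C)
    (p q r p' q' r' : EuclideanSpace ℝ (Fin 2)) (θ ℓ η : ℝ)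
    (hθ0 : 0 < θ) (hθ : θ ≤ π / 4) (hℓ : 0 < ℓ) (hη0 : 0 ≤ η)
    (hη : η ≤ Real.sqrt 3 * ℓ / 8 * Real.sin (θ / 2))
    (hp : p ∈ frontier C) (hq : q ∈ C) (hr : r ∈ C)
    (hpq : ℓ ≤ dist p q) (hpr : ℓ ≤ dist p r)
    (hangle : π - θ ≤ EuclideanGeometry.angle q p r)
    (hq' : dist q q' ≤ η * (2 / Real.sqrt 3))
    (hr' : dist r r' ≤ η * (2 / Real.sqrt 3))
    (hp' : dist p p' ≤ η * (2 / Real.sqrt 3)) :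
    ℓ / 2 ≤ dist p' q' ∧ ℓ / 2 ≤ dist p' r' ∧
      π - 2 * θ ≤ EuclideanGeometry.angle q' p' r' := by
  have hs3 : (0:ℝ) < Real.sqrt 3 := by positivity
  set δ : ℝ := η * (2 / Real.sqrt 3) with hδdef
  have hδ0 : 0 ≤ δ := by positivity
  set sθ : ℝ := Real.sin (θ / 2) with hsθ
  have hπ : 0 < π := Real.pi_pos
  have hθ2a : 0 < θ / 2 := by linarith
  have hθ2b : θ / 2 ≤ π / 2 := by linarith
  have hsθ0 : 0 < sθ := Real.sin_pos_of_pos_of_lt_pi hθ2a (by linarith)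
  have hsθ1 : sθ ≤ 1 := Real.sin_le_one _
  -- δ ≤ ℓ * sθ / 4
  have hδ : δ ≤ ℓ * sθ / 4 := by
    have : δ ≤ (Real.sqrt 3 * ℓ / 8 * sθ) * (2 / Real.sqrt 3) := by
      rw [hδdef]
      apply mul_le_mul_of_nonneg_right hη (by positivity)
    calc δ ≤ Real.sqrt 3 * ℓ / 8 * sθ * (2 / Real.sqrt 3) := this
      _ = ℓ * sθ / 4 := by field_simp; ring
  have key : ∀ x x' : EuclideanSpace ℝ (Fin 2), ℓ ≤ dist p x → dist x x' ≤ δ →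
      ℓ / 2 ≤ dist p' x' ∧ InnerProductGeometry.angle (x - p) (x' - p') ≤ θ / 2 := by
    intro x x' hpx hxx'
    have hd : ℓ / 2 ≤ dist p' x' := by
      have h1 : dist p x ≤ dist p p' + dist p' x' + dist x' x := dist_triangle4 p p' x' x
      have h2 : dist x' x = dist x x' := dist_comm _ _
      nlinarith
    refine ⟨hd, ?_⟩
    set u : EuclideanSpace ℝ (Fin 2) := x - p
    set u' : EuclideanSpace ℝ (Fin 2) := x' - p'
    have hnu : ℓ ≤ ‖u‖ := by
      rw [show u = x - p from rfl, ← dist_eq_norm, dist_comm]; exact hpx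
    have hnu' : ℓ / 2 ≤ ‖u'‖ := by
      rw [show u' = x' - p' from rfl, ← dist_eq_norm, dist_comm]; exact hd
    have hdiff : ‖u - u'‖ ≤ 2 * δ := by
      have : u - u' = (x - x') + (p' - p) := by
        simp only [u, u']; abel
      calc ‖u - u'‖ = ‖(x - x') + (p' - p)‖ := by rw [this]
        _ ≤ ‖x - x'‖ + ‖p' - p‖ := norm_add_le _ _
        _ = dist x x' + dist p' p := by rw [dist_eq_norm, dist_eq_norm]
        _ ≤ δ + δ := add_le_add hxx' (by rwa [dist_comm])
        _ = 2 * δ := by ring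
    have hune : u ≠ 0 := by
      intro h; rw [h, norm_zero] at hnu; linarith
    have hu'ne : u' ≠ 0 := by
      intro h; rw [h, norm_zero] at hnu'; linarith
    apply angle_pert u u' (θ / 2) hθ2a.le hθ2b hune hu'ne
    · calc ‖u - u'‖ ≤ 2 * δ := hdiff
        _ ≤ ℓ * sθ / 2 := by linarith
        _ ≤ ‖u'‖ * sθ := by nlinarith
    · calc ‖u - u'‖ ≤ 2 * δ := hdiff
        _ ≤ ℓ * sθ / 2 := by linarith
        _ < ℓ := by nlinarith
        _ ≤ ‖u‖ := hnu
  obtain ⟨hd1, ha1⟩ := key q q' hpq hq'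
  obtain ⟨hd2, ha2⟩ := key r r' hpr hr'
  refine ⟨hd1, hd2, ?_⟩
  -- nonzero vectors
  have hℓ2 : (0:ℝ) < ℓ / 2 := by linarith
  have nz : ∀ a b : EuclideanSpace ℝ (Fin 2), ℓ / 2 ≤ dist b a → a - b ≠ 0 := by
    intro a b h hc
    rw [sub_eq_zero] at hc
    rw [hc, dist_self] at h
    linarith
  have hqp : q - p ≠ 0 := nz q p (by linarith)
  have hrp : r - p ≠ 0 := nz r p (by linarith)
  have hqp' : q' - p' ≠ 0 := nz q' p' hd1
  have hrp' : r' - p' ≠ 0 := nz r' p' hd2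
  have hEq1 : EuclideanGeometry.angle q p r = InnerProductGeometry.angle (q - p) (r - p) := rfl
  have hEq2 : EuclideanGeometry.angle q' p' r' =
      InnerProductGeometry.angle (q' - p') (r' - p') := rfl
  have t1 : InnerProductGeometry.angle (q - p) (r - p) ≤
      InnerProductGeometry.angle (q - p) (q' - p') +
      InnerProductGeometry.angle (q' - p') (r - p) :=
    angle_triangle2 _ _ _ hqp hqp' hrp
  have t2 : InnerProductGeometry.angle (q' - p') (r - p) ≤
      InnerProductGeometry.angle (q' - p') (r' - p') +
      InnerProductGeometry.angle (r' - p') (r - p) :=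
    angle_triangle2 _ _ _ hqp' hrp' hrp
  have hcomm : InnerProductGeometry.angle (r' - p') (r - p) =
      InnerProductGeometry.angle (r - p) (r' - p') := InnerProductGeometry.angle_comm _ _
  rw [hEq1] at hangle
  rw [hEq2]
  linarith [ha1, ha2]
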